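/- arXiv:1809.02562 — 2 statements merged into one kernel-verified Lean document; each statement's English description precedes it below -/
import Mathlib

section
/- If E = ∅ and the points p_1, …, p_n affinely span ℝ^d, then the weak rigidity matrix satisfies rank(R_W(p)) ≤ dn − (d² + d + 2)/2. -/
open scoped RealInnerProductSpace

noncomputable section

/-- A point in `ℝ^d`. -/
abbrev Pt (d : ℕ) : Type := EuclideanSpace ℝ (Fin d)

/-- A configuration of `n` points in `ℝ^d`, identified with `ℝ^{dn}` (Euclidean norm). -/
abbrev Conf (d n : ℕ) : Type := PiLp 2 (fun _ : Fin n => Pt d)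

/-- Cosine of the angle at vertex `k` subtended by vertices `i` and `j`. -/
def cosAngle {d n : ℕ} (p : Conf d n) (k i j : Fin n) : ℝ :=
  ⟪p i - p k, p j - p k⟫ / (‖p i - p k‖ * ‖p j - p k‖)

/-- The set `χ` of admissible configurations for the angle set `A`. -/
def Chi {d n : ℕ} (A : Finset (Fin n × Fin n × Fin n)) : Set (Conf d n) :=
  {p | ∀ a ∈ A, p a.2.1 ≠ p a.1 ∧ p a.2.2 ≠ p a.1}

/-- The weak rigidity function `F_W`. -/
def FW {d n : ℕ} (E : Finset (Fin n × Fin n)) (A : Finset (Fin n × Fin n × Fin n))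
    (p : Conf d n) : EuclideanSpace ℝ (↥E ⊕ ↥A) :=
  WithLp.toLp 2 (fun x => Sum.elim (fun e : ↥E => ‖p e.1.1 - p e.1.2‖ ^ 2)
    (fun a : ↥A => cosAngle p a.1.1 a.1.2.1 a.1.2.2) x)

/-- The weak rigidity matrix `R_W(p)`: Jacobian (Fréchet derivative) of `F_W` at `p`. -/
def RW {d n : ℕ} (E : Finset (Fin n × Fin n)) (A : Finset (Fin n × Fin n × Fin n))
    (p : Conf d n) : Conf d n →L[ℝ] EuclideanSpace ℝ (↥E ⊕ ↥A) :=
  fderiv ℝ (FW E A) p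

/-- Rank of the weak rigidity matrix. -/
def rankRW {d n : ℕ} (E : Finset (Fin n × Fin n)) (A : Finset (Fin n × Fin n × Fin n))
    (p : Conf d n) : ℕ :=
  Module.finrank ℝ ↥(LinearMap.range (RW E A p).toLinearMap)

/-- `J` is skew-symmetric. -/
def IsSkewAdj {d : ℕ} (J : Pt d →ₗ[ℝ] Pt d) : Prop :=
  ∀ x y : Pt d, ⟪J x, y⟫ = - ⟪x, J y⟫

/-- Trivial infinitesimal motions (translations and rotations). -/
def trivialMotions {d n : ℕ} (p : Conf d n) : Set (Conf d n) :=
  {δ | ∃ (v : Pt d) (J : Pt d →ₗ[ℝ] Pt d), IsSkewAdj J ∧ ∀ i, δ i = v + J (p i)}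

/-- Trivial infinitesimal motions including scaling. -/
def trivialMotionsScale {d n : ℕ} (p : Conf d n) : Set (Conf d n) :=
  {δ | ∃ (v : Pt d) (J : Pt d →ₗ[ℝ] Pt d) (c : ℝ),
    IsSkewAdj J ∧ ∀ i, δ i = v + J (p i) + c • p i}

/-- Congruence of two configurations. -/
def ConfCongruent {d n : ℕ} (p q : Conf d n) : Prop :=
  ∀ i j, ‖q i - q j‖ = ‖p i - p j‖

/-- Proportional congruence of two configurations. -/
def PropCongruent {d n : ℕ} (p q : Conf d n) : Prop :=
  ∃ C : ℝ, 0 < C ∧ ∀ i j, ‖q i - q j‖ = C * ‖p i - p j‖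

/-- Generalized weak rigidity (case `E ≠ ∅`). -/
def IsGWR {d n : ℕ} (E : Finset (Fin n × Fin n)) (A : Finset (Fin n × Fin n × Fin n))
    (p : Conf d n) : Prop :=
  ∃ U ∈ nhds p, U ⊆ Chi A ∧ ∀ q ∈ U, FW E A q = FW E A p → ConfCongruent p q

/-- Generalized weak rigidity (case `E = ∅`, up to scaling). -/
def IsGWRScale {d n : ℕ} (E : Finset (Fin n × Fin n)) (A : Finset (Fin n × Fin n × Fin n))
    (p : Conf d n) : Prop :=
  ∃ U ∈ nhds p, U ⊆ Chi A ∧ ∀ q ∈ U, FW E A q = FW E A p → PropCongruent p q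

/-- `p` is a regular point of `F_W`: its rank attains the maximum over `χ`. -/
def IsRegularPt {d n : ℕ} (E : Finset (Fin n × Fin n)) (A : Finset (Fin n × Fin n × Fin n))
    (p : Conf d n) : Prop :=
  p ∈ Chi A ∧ ∀ q ∈ (Chi A : Set (Conf d n)), rankRW E A q ≤ rankRW E A p

/-- The gradient-flow vector field `u(p) = -R_W(p)ᵀ (F_W(p) - c)`. -/
def gradFlowVF {d n : ℕ} (E : Finset (Fin n × Fin n)) (A : Finset (Fin n × Fin n × Fin n))
    (c : EuclideanSpace ℝ (↥E ⊕ ↥A)) (p : Conf d n) : Conf d n :=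
  -(ContinuousLinearMap.adjoint (RW E A p)) (FW E A p - c)

set_option maxHeartbeats 1000000 in
set_option synthInstance.maxHeartbeats 400000 in
/-- `p : [0,∞) → χ` is a solution of the gradient flow `ṗ = -R_W(p)ᵀ e(p)`. -/
def IsGradFlowSol {d n : ℕ} (E : Finset (Fin n × Fin n)) (A : Finset (Fin n × Fin n × Fin n))
    (c : EuclideanSpace ℝ (↥E ⊕ ↥A)) (p : ℝ → Conf d n) : Prop :=
  (∀ t : ℝ, 0 ≤ t → p t ∈ Chi A) ∧
  ∀ t : ℝ, 0 ≤ t → HasDerivAt p (gradFlowVF E A c (p t)) t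

/-- Centroid of a configuration. -/
def centroid {d n : ℕ} (x : Conf d n) : Pt d := (n : ℝ)⁻¹ • ∑ i, x i

end

noncomputable section AuxStmt3

variable {d n : ℕ}

def projCLM (d n : ℕ) (i : Fin n) : Conf d n →L[ℝ] Pt d :=
  PiLp.proj (𝕜 := ℝ) 2 (fun _ : Fin n => Pt d) i

lemma diffAt_coord (i : Fin n) (p : Conf d n) :
    DifferentiableAt ℝ (fun q : Conf d n => q i) p := by
  have := (projCLM d n i).differentiableAt (x := p)
  have h : ⇑(projCLM d n i) = (fun q : Conf d n => q i) := by funext q; simp [projCLM]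
  rwa [h] at this

lemma diffAt_cosAngle (p : Conf d n) (k i j : Fin n) (hik : p i ≠ p k) (hjk : p j ≠ p k) :
    DifferentiableAt ℝ (fun q : Conf d n => cosAngle q k i j) p := by
  have hx : DifferentiableAt ℝ (fun q : Conf d n => q i - q k) p :=
    (diffAt_coord i p).sub (diffAt_coord k p)
  have hy : DifferentiableAt ℝ (fun q : Conf d n => q j - q k) p :=
    (diffAt_coord j p).sub (diffAt_coord k p)
  have hnum : DifferentiableAt ℝ (fun q : Conf d n => ⟪q i - q k, q j - q k⟫) p :=
    hx.inner ℝ hy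
  have hden : DifferentiableAt ℝ (fun q : Conf d n => ‖q i - q k‖ * ‖q j - q k‖) p :=
    (hx.norm ℝ (sub_ne_zero.2 hik)).mul (hy.norm ℝ (sub_ne_zero.2 hjk))
  have hd0 : ‖p i - p k‖ * ‖p j - p k‖ ≠ 0 :=
    mul_ne_zero (norm_ne_zero_iff.2 (sub_ne_zero.2 hik)) (norm_ne_zero_iff.2 (sub_ne_zero.2 hjk))
  simp only [cosAngle, div_eq_mul_inv]
  exact hnum.mul (hden.inv hd0)

lemma norm_line_hasDerivAt (x u : Pt d) (hx : x ≠ 0) :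
    HasDerivAt (fun t : ℝ => ‖x + t • u‖) (⟪x, u⟫ / ‖x‖) 0 := by
  have hA : HasDerivAt (fun t : ℝ => x + t • u) u 0 := by
    simpa using ((hasDerivAt_id (0 : ℝ)).smul_const u).const_add x
  have hs : HasDerivAt (fun t : ℝ => ⟪x + t • u, x + t • u⟫) (⟪x, u⟫ + ⟪u, x⟫) 0 := by
    simpa using hA.inner ℝ hA
  have hne : ⟪x + (0:ℝ) • u, x + (0:ℝ) • u⟫ ≠ 0 := by
    simpa using (inner_self_ne_zero (𝕜 := ℝ)).2 hx
  have hsq := hs.sqrt hne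
  have hfun : (fun t : ℝ => Real.sqrt ⟪x + t • u, x + t • u⟫) = fun t : ℝ => ‖x + t • u‖ := by
    funext t
    rw [real_inner_self_eq_norm_mul_norm, Real.sqrt_mul_self (norm_nonneg _)]
  rw [hfun] at hsq
  convert hsq using 1
  rw [real_inner_comm u x]
  have hnx : ‖x‖ ≠ 0 := norm_ne_zero_iff.2 hx
  simp only [zero_smul, add_zero, real_inner_self_eq_norm_mul_norm]
  rw [Real.sqrt_mul_self (norm_nonneg _)]
  field_simp
  ring

set_option maxHeartbeats 1000000 in
set_option synthInstance.maxHeartbeats 400000 in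
lemma fderiv_cosAngle_motion (p δ : Conf d n) (k i j : Fin n)
    (hik : p i ≠ p k) (hjk : p j ≠ p k)
    (v : Pt d) (J : Pt d →ₗ[ℝ] Pt d) (c : ℝ) (hJ : IsSkewAdj J)
    (hδ : ∀ i0, δ i0 = v + J (p i0) + c • p i0) :
    fderiv ℝ (fun q : Conf d n => cosAngle q k i j) p δ = 0 := by
  set x : Pt d := p i - p k with hxdef
  set y : Pt d := p j - p k with hydef
  have hxne : x ≠ 0 := sub_ne_zero.2 hik
  have hyne : y ≠ 0 := sub_ne_zero.2 hjk
  set u : Pt d := J x + c • x with hudef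
  set w : Pt d := J y + c • y with hwdef
  -- the coordinates of the line
  have hline1 : ∀ t : ℝ, (p + t • δ) i - (p + t • δ) k = x + t • u := by
    intro t
    have h1 : (p + t • δ) i = p i + t • δ i := rfl
    have h2 : (p + t • δ) k = p k + t • δ k := rfl
    rw [h1, h2, hδ i, hδ k, hudef, hxdef, map_sub]
    module
  have hline2 : ∀ t : ℝ, (p + t • δ) j - (p + t • δ) k = y + t • w := by
    intro t
    have h1 : (p + t • δ) j = p j + t • δ j := rfl
    have h2 : (p + t • δ) k = p k + t • δ k := rfl
    rw [h1, h2, hδ j, hδ k, hwdef, hydef, map_sub]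
    module
  -- skewness facts
  have hxu : ⟪x, u⟫ = c * (‖x‖ * ‖x‖) := by
    have h0 : ⟪x, J x⟫ = 0 := by
      have h1 := hJ x x
      have hc := real_inner_comm x (J x)
      linarith
    rw [hudef, inner_add_right, h0, real_inner_smul_right, real_inner_self_eq_norm_mul_norm]
    ring
  have hyw : ⟪y, w⟫ = c * (‖y‖ * ‖y‖) := by
    have h0 : ⟪y, J y⟫ = 0 := by
      have h1 := hJ y y
      have hc := real_inner_comm y (J y)
      linarith
    rw [hwdef, inner_add_right, h0, real_inner_smul_right, real_inner_self_eq_norm_mul_norm]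
    ring
  have hcross : ⟪x, w⟫ + ⟪u, y⟫ = 2 * (c * ⟪x, y⟫) := by
    have h0 : ⟪J x, y⟫ = - ⟪x, J y⟫ := hJ x y
    rw [hwdef, hudef, inner_add_right, inner_add_left, real_inner_smul_right,
      real_inner_smul_left, h0]
    ring
  -- derivatives along the line
  have hAx : HasDerivAt (fun t : ℝ => x + t • u) u 0 := by
    simpa using ((hasDerivAt_id (0 : ℝ)).smul_const u).const_add x
  have hAy : HasDerivAt (fun t : ℝ => y + t • w) w 0 := by
    simpa using ((hasDerivAt_id (0 : ℝ)).smul_const w).const_add y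
  have hN : HasDerivAt (fun t : ℝ => ⟪x + t • u, y + t • w⟫) (⟪x, w⟫ + ⟪u, y⟫) 0 := by
    simpa using hAx.inner ℝ hAy
  have hm1 := norm_line_hasDerivAt x u hxne
  have hm2 := norm_line_hasDerivAt y w hyne
  have hD : HasDerivAt (fun t : ℝ => ‖x + t • u‖ * ‖y + t • w‖)
      (⟪x, u⟫ / ‖x‖ * ‖y‖ + ‖x‖ * (⟪y, w⟫ / ‖y‖)) 0 := by
    simpa using hm1.fun_mul hm2
  have hden0 : ‖x + (0:ℝ) • u‖ * ‖y + (0:ℝ) • w‖ ≠ 0 := by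
    simpa using mul_ne_zero (norm_ne_zero_iff.2 hxne) (norm_ne_zero_iff.2 hyne)
  have hφ := hN.fun_div hD hden0
  -- the derivative value is 0
  have hzero : ((⟪x, w⟫ + ⟪u, y⟫) * (‖x + (0:ℝ) • u‖ * ‖y + (0:ℝ) • w‖) -
      ⟪x + (0:ℝ) • u, y + (0:ℝ) • w⟫ * (⟪x, u⟫ / ‖x‖ * ‖y‖ + ‖x‖ * (⟪y, w⟫ / ‖y‖))) /
      (‖x + (0:ℝ) • u‖ * ‖y + (0:ℝ) • w‖) ^ 2 = 0 := by
    have hnx : ‖x‖ ≠ 0 := norm_ne_zero_iff.2 hxne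
    have hny : ‖y‖ ≠ 0 := norm_ne_zero_iff.2 hyne
    simp only [zero_smul, add_zero]
    rw [hcross, hxu, hyw]
    field_simp
    ring
  rw [hzero] at hφ
  -- identify the function with cosAngle along the line
  have hfun : (fun t : ℝ => ⟪x + t • u, y + t • w⟫ / (‖x + t • u‖ * ‖y + t • w‖)) =
      (fun t : ℝ => cosAngle (p + t • δ) k i j) := by
    funext t
    rw [cosAngle, hline1 t, hline2 t]
  rw [hfun] at hφ
  -- composition with the line
  have hdiff := diffAt_cosAngle p k i j hik hjk
  have hlineD : HasDerivAt (fun t : ℝ => p + t • δ) δ 0 := by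
    simpa using ((hasDerivAt_id (0 : ℝ)).smul_const δ).const_add p
  have h0 : p + (0:ℝ) • δ = p := by simp
  have hcomp : HasDerivAt (fun t : ℝ => cosAngle (p + t • δ) k i j)
      (fderiv ℝ (fun q : Conf d n => cosAngle q k i j) p δ) 0 := by
    have hF : HasFDerivAt (fun q : Conf d n => cosAngle q k i j)
        (fderiv ℝ (fun q : Conf d n => cosAngle q k i j) p) (p + (0:ℝ) • δ) := by
      rw [h0]; exact hdiff.hasFDerivAt
    exact hF.comp_hasDerivAt 0 hlineD
  exact hcomp.unique hφ

def Jrot (d : ℕ) (l m : Fin d) : Pt d →ₗ[ℝ] Pt d :=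
  LinearMap.smulRight ((EuclideanSpace.proj m : Pt d →L[ℝ] ℝ) : Pt d →ₗ[ℝ] ℝ)
      (EuclideanSpace.single l (1:ℝ))
    - LinearMap.smulRight ((EuclideanSpace.proj l : Pt d →L[ℝ] ℝ) : Pt d →ₗ[ℝ] ℝ)
      (EuclideanSpace.single m (1:ℝ))

lemma Jrot_apply (l m : Fin d) (x : Pt d) :
    Jrot d l m x = x m • EuclideanSpace.single l (1:ℝ) - x l • EuclideanSpace.single m 1 := rfl

lemma Jrot_skew (l m : Fin d) : IsSkewAdj (Jrot d l m) := by
  intro x y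
  rw [Jrot_apply, Jrot_apply]
  rw [inner_sub_left, inner_sub_right, real_inner_smul_left, real_inner_smul_left,
    real_inner_smul_right, real_inner_smul_right,
    EuclideanSpace.inner_single_left, EuclideanSpace.inner_single_right,
    EuclideanSpace.inner_single_left, EuclideanSpace.inner_single_right]
  simp only [starRingEnd_apply, star_one, star_trivial]
  ring

abbrev MotIx (d : ℕ) := Fin d ⊕ ({q : Fin d × Fin d // q.1 < q.2} ⊕ Unit)

def motB (d n : ℕ) (p : Conf d n) : MotIx d → Conf d n := fun ix =>
  Sum.elim (fun l => WithLp.toLp 2 fun _ => EuclideanSpace.single l (1:ℝ))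
    (Sum.elim (fun q => WithLp.toLp 2 fun i0 => Jrot d q.1.1 q.1.2 (p i0)) (fun _ => p)) ix

lemma motB_indep (hd : d = 2 ∨ d = 3) (hn : 3 ≤ n) (p : Conf d n)
    (hspan : affineSpan ℝ (Set.range (fun i => p i)) = ⊤) :
    LinearIndependent ℝ (motB d n p) := by
  have hd0 : 0 < d := by rcases hd with h | h <;> omega
  rw [Fintype.linearIndependent_iff]
  intro g hg
  set v : Pt d := ∑ l : Fin d, g (Sum.inl l) • EuclideanSpace.single l (1:ℝ) with hv
  set Jt : Pt d →ₗ[ℝ] Pt d :=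
    ∑ q : {q : Fin d × Fin d // q.1 < q.2}, g (Sum.inr (Sum.inl q)) • Jrot d q.1.1 q.1.2 with hJt
  set c0 : ℝ := g (Sum.inr (Sum.inr ())) with hc0
  have hi : ∀ i0 : Fin n, v + Jt (p i0) + c0 • p i0 = 0 := by
    intro i0
    have h1 : (∑ ix : MotIx d, g ix • motB d n p ix) i0 = 0 := by rw [hg]; rfl
    have h2 : (∑ ix : MotIx d, g ix • motB d n p ix) i0 = v + Jt (p i0) + c0 • p i0 := by
      rw [WithLp.ofLp_sum, Finset.sum_apply]
      have hterm : ∀ ix : MotIx d, (g ix • motB d n p ix) i0 = g ix • motB d n p ix i0 :=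
        fun _ => rfl
      simp only [hterm]
      have e1 : ∑ l : Fin d, g (Sum.inl l) • motB d n p (Sum.inl l) i0 = v := by
        rw [hv]; rfl
      have e2 : ∑ q : {q : Fin d × Fin d // q.1 < q.2},
          g (Sum.inr (Sum.inl q)) • motB d n p (Sum.inr (Sum.inl q)) i0 = Jt (p i0) := by
        rw [hJt, LinearMap.sum_apply]
        apply Finset.sum_congr rfl
        intro q _
        rw [LinearMap.smul_apply]
        rfl
      have e3 : ∑ u : Unit, g (Sum.inr (Sum.inr u)) • motB d n p (Sum.inr (Sum.inr u)) i0
          = c0 • p i0 := by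
        rw [Fintype.sum_unique]; rfl
      rw [Fintype.sum_sum_type, Fintype.sum_sum_type, e1, e2, e3, ← add_assoc]
    rw [← h2]
    exact h1
  -- T := Jt + c0 • id kills all differences
  set T : Pt d →ₗ[ℝ] Pt d := Jt + c0 • LinearMap.id with hT
  have hTdiff : ∀ i0 j0 : Fin n, T (p i0 - p j0) = 0 := by
    intro i0 j0
    have h0 : (v + Jt (p i0) + c0 • p i0) - (v + Jt (p j0) + c0 • p j0) = 0 := by
      rw [hi i0, hi j0, sub_zero]
    calc T (p i0 - p j0) = (v + Jt (p i0) + c0 • p i0) - (v + Jt (p j0) + c0 • p j0) := by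
          rw [hT]; simp only [LinearMap.add_apply, LinearMap.smul_apply, LinearMap.id_apply,
            map_sub, smul_sub]
          abel
      _ = 0 := h0
  have hvs : vectorSpan ℝ (Set.range (fun i => p i)) = ⊤ := by
    exact AffineSubspace.vectorSpan_eq_top_of_affineSpan_eq_top ℝ _ _ hspan
  have hTzero : T = 0 := by
    have hker : (⊤ : Submodule ℝ (Pt d)) ≤ LinearMap.ker T := by
      rw [← hvs, vectorSpan_def, Submodule.span_le]
      rintro z hz
      rw [Set.mem_vsub] at hz
      obtain ⟨a, ⟨i0, rfl⟩, b, ⟨j0, rfl⟩, rfl⟩ := hz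
      exact hTdiff i0 j0
    exact LinearMap.ext fun z => LinearMap.mem_ker.mp (hker Submodule.mem_top)
  have hJtskew : IsSkewAdj Jt := by
    intro x y
    rw [hJt]
    simp only [LinearMap.sum_apply, LinearMap.smul_apply, sum_inner, inner_sum,
      real_inner_smul_left, real_inner_smul_right]
    rw [← Finset.sum_neg_distrib]
    apply Finset.sum_congr rfl
    intro q _
    rw [Jrot_skew q.1.1 q.1.2 x y]
    ring
  -- c0 = 0
  have hc00 : c0 = 0 := by
    set z : Pt d := EuclideanSpace.single (⟨0, hd0⟩ : Fin d) (1:ℝ) with hz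
    have hTz : Jt z + c0 • z = 0 := by
      have h3 : T z = 0 := by rw [hTzero]; rfl
      rw [hT] at h3
      simpa using h3
    have h4 : ⟪Jt z, z⟫ + c0 * ⟪z, z⟫ = 0 := by
      have h4' : ⟪Jt z + c0 • z, z⟫ = 0 := by rw [hTz, inner_zero_left]
      rwa [inner_add_left, real_inner_smul_left] at h4'
    have h5 : ⟪Jt z, z⟫ = 0 := by
      have h6 := hJtskew z z
      have h7 := real_inner_comm z (Jt z)
      linarith
    have h8 : ⟪z, z⟫ = (1:ℝ) := by
      rw [hz, EuclideanSpace.inner_single_left]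
      simp [EuclideanSpace.single_apply]
    rw [h5, h8] at h4
    linarith
  -- Jt = 0
  have hJt0 : Jt = 0 := by
    have hTJt : T = Jt := by rw [hT, hc00]; simp
    rw [← hTJt, hTzero]
  -- rotation coefficients vanish
  have hrot : ∀ q : {q : Fin d × Fin d // q.1 < q.2}, g (Sum.inr (Sum.inl q)) = 0 := by
    rintro ⟨⟨l, m⟩, hlm⟩
    have hlm' : l ≠ m := ne_of_lt hlm
    have h9 : Jt (EuclideanSpace.single m (1:ℝ)) l = 0 := by rw [hJt0]; rfl
    rw [hJt, LinearMap.sum_apply, WithLp.ofLp_sum, Finset.sum_apply,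
      Finset.sum_eq_single (⟨(l, m), hlm⟩ : {q : Fin d × Fin d // q.1 < q.2})] at h9
    · simp only [LinearMap.smul_apply, Jrot_apply, PiLp.smul_apply, PiLp.sub_apply,
        EuclideanSpace.single_apply, smul_eq_mul] at h9
      simp [hlm'] at h9
      exact h9
    · rintro ⟨⟨l', m'⟩, hlm2⟩ - hne
      simp only [LinearMap.smul_apply, Jrot_apply, PiLp.smul_apply, PiLp.sub_apply,
        EuclideanSpace.single_apply, smul_eq_mul]
      by_cases h1 : m' = m
      · by_cases h2 : l = l'
        · subst h1; subst h2; exact absurd rfl hne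
        · have h3 : l' ≠ m := by
            intro hc
            rw [hc, h1] at hlm2
            exact lt_irrefl m hlm2
          rw [if_neg h2, if_neg h3]
          ring
      · by_cases h3 : l' = m
        · by_cases h4 : l = m'
          · exfalso
            have v1 : (l : ℕ) < m := hlm
            have v2 : (l' : ℕ) < m' := hlm2
            have v3 : (l' : ℕ) = m := congrArg Fin.val h3
            have v4 : (l : ℕ) = m' := congrArg Fin.val h4
            omega
          · rw [if_neg h1, if_neg h4]
            ring
        · rw [if_neg h1, if_neg h3]
          ring
    · intro hmem
      exact absurd (Finset.mem_univ _) hmem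
  -- v = 0
  have hv0 : v = 0 := by
    have hn0 : 0 < n := by omega
    have h10 := hi ⟨0, hn0⟩
    rw [hJt0, hc00] at h10
    simpa using h10
  -- translation coefficients vanish
  have htr : ∀ l : Fin d, g (Sum.inl l) = 0 := by
    intro l
    have h11 : v l = 0 := by rw [hv0]; rfl
    rw [hv, WithLp.ofLp_sum, Finset.sum_apply, Finset.sum_eq_single l] at h11
    · rw [PiLp.smul_apply, EuclideanSpace.single_apply, if_pos rfl] at h11
      simpa using h11
    · rintro b - hb
      rw [PiLp.smul_apply, EuclideanSpace.single_apply, if_neg (Ne.symm hb)]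
      simp
    · intro hmem
      exact absurd (Finset.mem_univ _) hmem
  rintro (l | q | u)
  · exact htr l
  · exact hrot q
  · cases u
    exact hc00

-- the derivative of FW when E = ∅
set_option maxHeartbeats 1000000 in
set_option synthInstance.maxHeartbeats 400000 in
lemma RW_apply_empty (A : Finset (Fin n × Fin n × Fin n)) (p : Conf d n)
    (hp : p ∈ Chi (d := d) A) (δ : Conf d n)
    (hcomp : ∀ a : ↥A,
      fderiv ℝ (fun q : Conf d n => cosAngle q a.1.1 a.1.2.1 a.1.2.2) p δ = 0) :
    RW (∅ : Finset (Fin n × Fin n)) A p δ = 0 := by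
  classical
  set E : Finset (Fin n × Fin n) := ∅ with hE
  have hEempty : IsEmpty ↥E := ⟨fun e => (Finset.notMem_empty _ e.2)⟩
  -- component derivatives
  set D : (x : ↥E ⊕ ↥A) → (Conf d n →L[ℝ] ℝ) := fun x =>
    Sum.elim (fun e : ↥E => (hEempty.false e).elim)
      (fun a : ↥A => fderiv ℝ (fun q : Conf d n => cosAngle q a.1.1 a.1.2.1 a.1.2.2) p) x
    with hD
  have hpi : HasFDerivAt (fun (q : Conf d n) (x : ↥E ⊕ ↥A) => FW E A q x)
      (ContinuousLinearMap.pi D) p := by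
    rw [hasFDerivAt_pi]
    rintro (e | a)
    · exact (hEempty.false e).elim
    · have ha := hp a.1 a.2
      have := (diffAt_cosAngle p a.1.1 a.1.2.1 a.1.2.2 ha.1 ha.2).hasFDerivAt
      exact this
  -- transport through the PiLp equivalence
  let iso : (↥E ⊕ ↥A → ℝ) ≃L[ℝ] EuclideanSpace ℝ (↥E ⊕ ↥A) :=
    (PiLp.continuousLinearEquiv 2 ℝ (fun _ : ↥E ⊕ ↥A => ℝ)).symm
  have hFW : HasFDerivAt (FW E A)
      ((iso : (↥E ⊕ ↥A → ℝ) →L[ℝ] EuclideanSpace ℝ (↥E ⊕ ↥A)).comp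
        (ContinuousLinearMap.pi D)) p := by
    have := (iso.comp_hasFDerivAt_iff
      (f := fun (q : Conf d n) (x : ↥E ⊕ ↥A) => FW E A q x)
      (x := p) (f' := ContinuousLinearMap.pi D)).2 hpi
    exact this
  have hRW : RW E A p = (iso : (↥E ⊕ ↥A → ℝ) →L[ℝ] _).comp (ContinuousLinearMap.pi D) :=
    hFW.fderiv
  rw [hRW]
  have hz : (ContinuousLinearMap.pi D) δ = 0 := by
    funext x
    rcases x with e | a
    · exact (hEempty.false e).elim
    · simpa [hD] using hcomp a
  rw [ContinuousLinearMap.comp_apply, hz, map_zero]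


lemma motion_in_ker {d n : ℕ} (A : Finset (Fin n × Fin n × Fin n)) (p : Conf d n)
    (hp : p ∈ Chi (d := d) A) (δ : Conf d n) (v : Pt d) (J : Pt d →ₗ[ℝ] Pt d) (c : ℝ)
    (hJ : IsSkewAdj J) (hδ : ∀ i0, δ i0 = v + J (p i0) + c • p i0) :
    RW (∅ : Finset (Fin n × Fin n)) A p δ = 0 := by
  apply RW_apply_empty A p hp δ
  intro a
  have ha := hp a.1 a.2
  exact fderiv_cosAngle_motion p δ a.1.1 a.1.2.1 a.1.2.2 ha.1 ha.2 v J c hJ hδ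

end AuxStmt3
/-- if `E = ∅` and the points affinely span `ℝ^d`, then
`rank(R_W(p)) ≤ dn − (d² + d + 2)/2`. -/
theorem stmt3 {d n : ℕ} (hd : d = 2 ∨ d = 3) (hn : 3 ≤ n)
    (E : Finset (Fin n × Fin n)) (A : Finset (Fin n × Fin n × Fin n))
    (hE : E = ∅)
    (hA : ∀ a ∈ A, a.1 ≠ a.2.1 ∧ a.1 ≠ a.2.2 ∧ a.2.1 ≠ a.2.2)
    (p : Conf d n) (hp : p ∈ Chi A)
    (hspan : affineSpan ℝ (Set.range (fun i => p i)) = ⊤) :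
    rankRW E A p ≤ d * n - (d ^ 2 + d + 2) / 2 := by
  classical
  subst hE
  have hzero_skew : IsSkewAdj (0 : Pt d →ₗ[ℝ] Pt d) := by
    intro x y; simp
  have hker : ∀ ix : MotIx d,
      motB d n p ix ∈ LinearMap.ker (RW (∅ : Finset (Fin n × Fin n)) A p).toLinearMap := by
    rintro (l | q | u) <;> rw [LinearMap.mem_ker]
    · exact motion_in_ker A p hp _ (EuclideanSpace.single l 1) 0 0 hzero_skew
        (fun i0 => by simp [motB])
    · exact motion_in_ker A p hp _ 0 (Jrot d q.1.1 q.1.2) 0 (Jrot_skew _ _)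
        (fun i0 => by simp [motB])
    · exact motion_in_ker A p hp _ 0 0 1 hzero_skew (fun i0 => by simp [motB])
  have hle : Submodule.span ℝ (Set.range (motB d n p)) ≤
      LinearMap.ker (RW (∅ : Finset (Fin n × Fin n)) A p).toLinearMap := by
    rw [Submodule.span_le]
    rintro z ⟨ix, rfl⟩
    exact hker ix
  have hind := motB_indep hd hn p hspan
  have hcard : Module.finrank ℝ
      ↥(Submodule.span ℝ (Set.range (motB d n p))) = Fintype.card (MotIx d) :=
    finrank_span_eq_card hind
  have hmono := Submodule.finrank_mono hle
  rw [hcard] at hmono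
  have hrn := LinearMap.finrank_range_add_finrank_ker
    (↑(RW (∅ : Finset (Fin n × Fin n)) A p) :
      Conf d n →ₗ[ℝ] EuclideanSpace ℝ (↥(∅ : Finset (Fin n × Fin n)) ⊕ ↥A))
  have hfr : Module.finrank ℝ (Conf d n) = d * n := by
    rw [(WithLp.linearEquiv 2 ℝ (∀ _ : Fin n, Pt d)).finrank_eq, Module.finrank_pi_fintype]
    simp [finrank_euclideanSpace, mul_comm]
  rw [hfr] at hrn
  have hrange : rankRW (∅ : Finset (Fin n × Fin n)) A p =
      Module.finrank ℝ ↥(LinearMap.range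
        (↑(RW (∅ : Finset (Fin n × Fin n)) A p) :
          Conf d n →ₗ[ℝ] EuclideanSpace ℝ (↥(∅ : Finset (Fin n × Fin n)) ⊕ ↥A))) := rfl
  have hkerid : LinearMap.ker (RW (∅ : Finset (Fin n × Fin n)) A p).toLinearMap =
      LinearMap.ker (↑(RW (∅ : Finset (Fin n × Fin n)) A p) :
        Conf d n →ₗ[ℝ] EuclideanSpace ℝ (↥(∅ : Finset (Fin n × Fin n)) ⊕ ↥A)) := rfl
  rw [hkerid] at hmono
  rw [hrange]
  have hc2 : (d ^ 2 + d + 2) / 2 ≤ Fintype.card (MotIx d) := by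
    obtain rfl | rfl := hd <;> decide
  omega
end

section
/- Let p, q ∈ χ both be regular points of F_W whose points affinely span ℝ^d. If the framework (G, A, p) is GIWR (ker R_W(p) equals the space of trivial motions at p), then (G, A, q) is GIWR (ker R_W(q) equals the space of trivial motions at q). This holds both for E ≠ ∅ (trivial motions = translations and rotations) and for E = ∅ (trivial motions = translations, rotations, and scalings). -/
open scoped RealInnerProductSpace

noncomputable section Aux

open NormedSpace

variable {d n : ℕ}

/-- The submodule of skew-adjoint endomorphisms. -/
def skewSub (d : ℕ) : Submodule ℝ (Pt d →ₗ[ℝ] Pt d) where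
  carrier := {J | IsSkewAdj J}
  add_mem' := by
    intro a b ha hb x y
    simp only [LinearMap.add_apply, inner_add_left, inner_add_right, ha x y, hb x y]
    ring
  zero_mem' := by intro x y; simp
  smul_mem' := by
    intro c a ha x y
    simp only [LinearMap.smul_apply, real_inner_smul_left, real_inner_smul_right, ha x y]
    ring

/-- Linear parametrization of trivial motions. -/
def Phi (p : Conf d n) : (Pt d × skewSub d) →ₗ[ℝ] Conf d n where
  toFun vJ := WithLp.toLp 2 (fun i => vJ.1 + (vJ.2 : Pt d →ₗ[ℝ] Pt d) (p i))
  map_add' a b := by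
    refine PiLp.ext fun i => ?_
    show (a.1 + b.1) + ((a.2 : Pt d →ₗ[ℝ] Pt d) + (b.2 : Pt d →ₗ[ℝ] Pt d)) (p i) = _
    simp only [LinearMap.add_apply, PiLp.add_apply, PiLp.toLp_apply]
    abel
  map_smul' c a := by
    refine PiLp.ext fun i => ?_
    show (c • a.1) + (c • (a.2 : Pt d →ₗ[ℝ] Pt d)) (p i) = _
    simp only [LinearMap.smul_apply, PiLp.smul_apply, RingHom.id_apply, smul_add, PiLp.toLp_apply]

/-- Linear parametrization of trivial motions with scaling. -/
def PhiS (p : Conf d n) : (Pt d × skewSub d × ℝ) →ₗ[ℝ] Conf d n where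
  toFun vJc := WithLp.toLp 2 (fun i => vJc.1 + (vJc.2.1 : Pt d →ₗ[ℝ] Pt d) (p i) + vJc.2.2 • p i)
  map_add' a b := by
    refine PiLp.ext fun i => ?_
    show (a.1 + b.1) + ((a.2.1 : Pt d →ₗ[ℝ] Pt d) + (b.2.1 : Pt d →ₗ[ℝ] Pt d)) (p i)
      + (a.2.2 + b.2.2) • p i = _
    simp only [LinearMap.add_apply, PiLp.add_apply, add_smul, PiLp.toLp_apply]
    abel
  map_smul' c a := by
    refine PiLp.ext fun i => ?_
    show (c • a.1) + (c • (a.2.1 : Pt d →ₗ[ℝ] Pt d)) (p i) + (c * a.2.2) • p i = _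
    simp only [LinearMap.smul_apply, PiLp.smul_apply, RingHom.id_apply, smul_add, mul_smul, PiLp.toLp_apply]

lemma trivialMotions_eq (p : Conf d n) :
    trivialMotions p = (LinearMap.range (Phi p) : Submodule ℝ (Conf d n)) := by
  ext δ
  constructor
  · rintro ⟨v, J, hJ, h⟩
    exact ⟨(v, ⟨J, hJ⟩), (PiLp.ext fun i => (h i).symm)⟩
  · rintro ⟨⟨v, J⟩, rfl⟩
    exact ⟨v, (J : Pt d →ₗ[ℝ] Pt d), J.2, fun i => rfl⟩

lemma trivialMotionsScale_eq (p : Conf d n) :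
    trivialMotionsScale p = (LinearMap.range (PhiS p) : Submodule ℝ (Conf d n)) := by
  ext δ
  constructor
  · rintro ⟨v, J, c, hJ, h⟩
    exact ⟨(v, ⟨J, hJ⟩, c), (PiLp.ext fun i => (h i).symm)⟩
  · rintro ⟨⟨v, J, c⟩, rfl⟩
    exact ⟨v, (J : Pt d →ₗ[ℝ] Pt d), c, J.2, fun i => rfl⟩

lemma vanish_on_diffs {p : Conf d n} (hn : 0 < n)
    (hspan : affineSpan ℝ (Set.range (fun i => p i)) = ⊤)
    (J : Pt d →ₗ[ℝ] Pt d) (h : ∀ i j, J (p i - p j) = 0) : J = 0 := by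
  haveI : NeZero n := ⟨hn.ne'⟩
  have hne : (Set.range (fun i => p i)).Nonempty := Set.range_nonempty _
  have hvs : vectorSpan ℝ (Set.range (fun i => p i)) = ⊤ :=
    AffineSubspace.vectorSpan_eq_top_of_affineSpan_eq_top ℝ _ _ hspan
  refine LinearMap.ext fun x => ?_
  rw [LinearMap.zero_apply]
  have hx : x ∈ vectorSpan ℝ (Set.range (fun i => p i)) := by rw [hvs]; trivial
  rw [vectorSpan_def] at hx
  refine Submodule.span_induction ?_ ?_ ?_ ?_ hx
  · rintro z hz
    rw [Set.mem_vsub] at hz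
    obtain ⟨a, ⟨i, rfl⟩, b, ⟨j, rfl⟩, rfl⟩ := hz
    simpa [vsub_eq_sub] using h i j
  · simp
  · intro a b _ _ ha hb; simp [map_add, ha, hb]
  · intro c a _ ha; simp [map_smul, ha]

lemma Phi_injective {p : Conf d n} (hn : 0 < n)
    (hspan : affineSpan ℝ (Set.range (fun i => p i)) = ⊤) :
    Function.Injective (Phi p) := by
  rw [← LinearMap.ker_eq_bot, LinearMap.ker_eq_bot']
  rintro ⟨v, J⟩ hvJ
  have h : ∀ i, v + (J : Pt d →ₗ[ℝ] Pt d) (p i) = 0 := fun i => congrArg (fun x : Conf d n => x i) hvJ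
  have hJ0 : (J : Pt d →ₗ[ℝ] Pt d) = 0 := by
    refine vanish_on_diffs hn hspan _ fun i j => ?_
    have := h i; have := h j
    simp only [map_sub]
    rw [show (J : Pt d →ₗ[ℝ] Pt d) (p i) = -v by linear_combination (norm := module) h i,
      show (J : Pt d →ₗ[ℝ] Pt d) (p j) = -v by linear_combination (norm := module) h j]
    abel
  have hv : v = 0 := by
    have := h ⟨0, hn⟩
    rw [hJ0] at this; simpa using this
  exact Prod.ext hv (Subtype.ext hJ0)

lemma PhiS_injective {p : Conf d n} (hn : 0 < n) (hd : 0 < d)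
    (hspan : affineSpan ℝ (Set.range (fun i => p i)) = ⊤) :
    Function.Injective (PhiS p) := by
  rw [← LinearMap.ker_eq_bot, LinearMap.ker_eq_bot']
  rintro ⟨v, J, c⟩ hvJ
  have h : ∀ i, v + (J : Pt d →ₗ[ℝ] Pt d) (p i) + c • p i = 0 := fun i => congrArg (fun x : Conf d n => x i) hvJ
  set K : Pt d →ₗ[ℝ] Pt d := (J : Pt d →ₗ[ℝ] Pt d) + c • LinearMap.id with hK
  have hK0 : K = 0 := by
    refine vanish_on_diffs hn hspan _ fun i j => ?_
    have hi := h i; have hj := h j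
    simp only [hK, LinearMap.add_apply, LinearMap.smul_apply, LinearMap.id_apply, map_sub,
      smul_sub]
    linear_combination (norm := module) hi - hj
  -- J = -c • id; skewness forces c = 0
  have hJc : ∀ x : Pt d, (J : Pt d →ₗ[ℝ] Pt d) x = -(c • x) := by
    intro x
    have := congrFun (congrArg (fun (f : Pt d →ₗ[ℝ] Pt d) => (f : Pt d → Pt d)) hK0) x
    simp only [hK, LinearMap.add_apply, LinearMap.smul_apply, LinearMap.id_apply,
      LinearMap.zero_apply] at this
    linear_combination (norm := module) this
  have hc : c = 0 := by
    set x : Pt d := EuclideanSpace.single ⟨0, hd⟩ (1 : ℝ) with hx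
    have hxn : ⟪x, x⟫ = 1 := by
      rw [real_inner_self_eq_norm_sq, hx, EuclideanSpace.norm_single]; norm_num
    have hs := J.2 x x
    rw [hJc x] at hs
    rw [inner_neg_left, inner_neg_right, real_inner_smul_left, real_inner_smul_right, hxn] at hs
    simp at hs
    linarith [hs]
  have hJ0 : (J : Pt d →ₗ[ℝ] Pt d) = 0 := by
    ext x; rw [hJc x, hc]; simp
  have hv : v = 0 := by
    have := h ⟨0, hn⟩
    rw [hJ0, hc] at this; simpa using this
  refine Prod.ext hv (Prod.ext (Subtype.ext hJ0) hc)

lemma diffAt_eval (q : Conf d n) (i : Fin n) :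
    DifferentiableAt ℝ (fun p : Conf d n => p i) q :=
  (((ContinuousLinearMap.proj i : (∀ _ : Fin n, Pt d) →L[ℝ] Pt d).comp
    ((PiLp.continuousLinearEquiv 2 ℝ
      (fun _ : Fin n => Pt d)).toContinuousLinearMap))).differentiableAt

lemma FW_diffAt (E : Finset (Fin n × Fin n)) (A : Finset (Fin n × Fin n × Fin n))
    (q : Conf d n) (hq : q ∈ Chi A) : DifferentiableAt ℝ (FW E A) q := by
  have h : DifferentiableAt ℝ (fun p =>
      (PiLp.continuousLinearEquiv 2 ℝ (fun _ : ↥E ⊕ ↥A => ℝ)) (FW E A p)) q := by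
    rw [differentiableAt_pi]
    rintro (e | a)
    · show DifferentiableAt ℝ (fun p : Conf d n => ‖p e.1.1 - p e.1.2‖ ^ 2) q
      exact ((diffAt_eval q _).sub (diffAt_eval q _)).norm_sq ℝ
    · show DifferentiableAt ℝ
        (fun p : Conf d n => cosAngle p a.1.1 a.1.2.1 a.1.2.2) q
      obtain ⟨h1, h2⟩ := hq a.1 a.2
      have hki : q a.1.2.1 - q a.1.1 ≠ 0 := sub_ne_zero_of_ne h1
      have hkj : q a.1.2.2 - q a.1.1 ≠ 0 := sub_ne_zero_of_ne h2
      have hrw : (fun p : Conf d n => cosAngle p a.1.1 a.1.2.1 a.1.2.2)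
          = fun p => (⟪p a.1.2.1 - p a.1.1, p a.1.2.2 - p a.1.1⟫ : ℝ)
            * (‖p a.1.2.1 - p a.1.1‖ * ‖p a.1.2.2 - p a.1.1‖)⁻¹ := by
        funext p; rw [cosAngle, div_eq_mul_inv]
      have hnum : DifferentiableAt ℝ (fun p : Conf d n =>
          ⟪p a.1.2.1 - p a.1.1, p a.1.2.2 - p a.1.1⟫) q :=
        ((diffAt_eval q _).sub (diffAt_eval q _)).inner ℝ
          ((diffAt_eval q _).sub (diffAt_eval q _))
      have hden : DifferentiableAt ℝ (fun p : Conf d n =>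
          ‖p a.1.2.1 - p a.1.1‖ * ‖p a.1.2.2 - p a.1.1‖) q :=
        (((diffAt_eval q _).sub (diffAt_eval q _)).norm ℝ hki).mul
          (((diffAt_eval q _).sub (diffAt_eval q _)).norm ℝ hkj)
      rw [hrw]
      exact hnum.mul (hden.inv
        (mul_ne_zero (norm_ne_zero_iff.mpr hki) (norm_ne_zero_iff.mpr hkj)))
  exact ((PiLp.continuousLinearEquiv 2 ℝ
    (fun _ : ↥E ⊕ ↥A => ℝ)).comp_differentiableAt_iff).mp h

lemma star_clm_of_skew {J : Pt d →ₗ[ℝ] Pt d} (hJ : IsSkewAdj J) :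
    star (LinearMap.toContinuousLinearMap J) = -(LinearMap.toContinuousLinearMap J) := by
  rw [ContinuousLinearMap.star_eq_adjoint]
  refine ContinuousLinearMap.ext fun x => ?_
  refine ext_inner_right ℝ fun z => ?_
  rw [ContinuousLinearMap.adjoint_inner_left]
  simp only [ContinuousLinearMap.neg_apply, inner_neg_left,
    LinearMap.coe_toContinuousLinearMap']
  have := hJ x z
  linarith

lemma exp_skew_inner {J : Pt d →L[ℝ] Pt d} (hJ : star J = -J) (t : ℝ) (x y : Pt d) :
    ⟪exp (t • J) x, exp (t • J) y⟫ = ⟪x, y⟫ := by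
  have h1 : ContinuousLinearMap.adjoint (exp (t • J)) = exp (-(t • J)) := by
    rw [← ContinuousLinearMap.star_eq_adjoint, star_exp]
    congr 1
    rw [star_smul, hJ, star_trivial, smul_neg]
  have h2 : exp (-(t • J)) * exp (t • J) = 1 := by
    rw [← exp_add_of_commute_of_mem_ball (𝕂 := ℝ) (Commute.refl (t • J)).neg_left
      ((expSeries_radius_eq_top ℝ (Pt d →L[ℝ] Pt d)).symm ▸ edist_lt_top _ _)
      ((expSeries_radius_eq_top ℝ (Pt d →L[ℝ] Pt d)).symm ▸ edist_lt_top _ _), neg_add_cancel, exp_zero]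
  rw [← ContinuousLinearMap.adjoint_inner_right (exp (t • J)) x (exp (t • J) y), h1,
    ← ContinuousLinearMap.mul_apply, h2, ContinuousLinearMap.one_apply]

lemma exp_skew_norm {J : Pt d →L[ℝ] Pt d} (hJ : star J = -J) (t : ℝ) (x : Pt d) :
    ‖exp (t • J) x‖ = ‖x‖ := by
  have h := exp_skew_inner hJ t x x
  rw [real_inner_self_eq_norm_sq, real_inner_self_eq_norm_sq] at h
  calc ‖exp (t • J) x‖ = Real.sqrt (‖exp (t • J) x‖ ^ 2) :=
        (Real.sqrt_sq (norm_nonneg _)).symm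
    _ = Real.sqrt (‖x‖ ^ 2) := by rw [h]
    _ = ‖x‖ := Real.sqrt_sq (norm_nonneg _)

set_option maxHeartbeats 1000000 in
set_option synthInstance.maxHeartbeats 400000 in
lemma RW_trivial (E : Finset (Fin n × Fin n)) (A : Finset (Fin n × Fin n × Fin n))
    (q : Conf d n) (hq : q ∈ Chi A)
    (v : Pt d) (J : Pt d →ₗ[ℝ] Pt d) (hJ : IsSkewAdj J) (c : ℝ)
    (hcE : c = 0 ∨ E = ∅) :
    RW E A q (WithLp.toLp 2 (fun i => v + J (q i) + c • q i)) = 0 := by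
  set Jc := LinearMap.toContinuousLinearMap J with hJcdef
  have hstar : star Jc = -Jc := star_clm_of_skew hJ
  set δ : Conf d n := WithLp.toLp 2 (fun i => v + J (q i) + c • q i) with hδdef
  set γ : ℝ → Conf d n :=
    fun t => WithLp.toLp 2 (fun i => exp (t • Jc) (Real.exp (c * t) • q i) + t • v) with hγdef
  have hγ0 : γ 0 = q := by
    refine PiLp.ext fun i => ?_
    show exp ((0:ℝ) • Jc) (Real.exp (c * 0) • q i) + (0:ℝ) • v = q i
    rw [show (0:ℝ) • Jc = 0 by exact zero_smul ℝ Jc, exp_zero]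
    simp
  have hγd : HasDerivAt γ δ 0 := by
    set φ := PiLp.continuousLinearEquiv 2 ℝ (fun _ : Fin n => Pt d) with hφ
    have hpi : HasDerivAt (⇑φ ∘ γ) (φ δ) 0 := by
      refine hasDerivAt_pi.mpr fun i => ?_
      have h1 : HasDerivAt (fun t : ℝ => exp (t • Jc)) (exp ((0:ℝ) • Jc) * Jc) 0 :=
        hasDerivAt_exp_smul_const Jc 0
      have h2 : HasDerivAt (fun t : ℝ => Real.exp (c * t) • q i)
          ((Real.exp (c * 0) * (c * 1)) • q i) 0 :=
        (((hasDerivAt_id (0:ℝ)).const_mul c).exp).smul_const (q i)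
      have h3 := (h1.clm_apply h2).add ((hasDerivAt_id (0:ℝ)).smul_const v)
      have hval : (exp ((0:ℝ) • Jc) * Jc) (Real.exp (c * 0) • q i)
          + exp ((0:ℝ) • Jc) ((Real.exp (c * 0) * (c * 1)) • q i) + (1:ℝ) • v
          = v + J (q i) + c • q i := by
        rw [show (0:ℝ) • Jc = 0 by exact zero_smul ℝ Jc, exp_zero]
        simp [hJcdef]
        abel
      have h4 : HasDerivAt (fun t => exp (t • Jc) (Real.exp (c * t) • q i) + t • v)
            (v + J (q i) + c • q i) 0 := hval ▸ h3
      exact h4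
    have hback := (φ.symm : (Fin n → Pt d) →L[ℝ] Conf d n).hasFDerivAt.comp_hasDerivAt 0 hpi
    simp only [Function.comp_def, ContinuousLinearEquiv.symm_apply_apply] at hback
    exact hback
  have hinv : ∀ t, FW E A (γ t) = FW E A q := by
    intro t
    have he : (0:ℝ) < Real.exp (c * t) := Real.exp_pos _
    have key : ∀ i k : Fin n, γ t i - γ t k
        = exp (t • Jc) (Real.exp (c * t) • (q i - q k)) := by
      intro i k
      show exp (t • Jc) (Real.exp (c * t) • q i) + t • v
          - (exp (t • Jc) (Real.exp (c * t) • q k) + t • v) = _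
      rw [smul_sub, map_sub]
      abel
    refine PiLp.ext fun x => ?_
    rcases x with e | a
    · show ‖γ t e.1.1 - γ t e.1.2‖ ^ 2 = ‖q e.1.1 - q e.1.2‖ ^ 2
      rcases hcE with hc0 | hE0
      · rw [key, exp_skew_norm hstar, hc0]
        simp
      · exact absurd e.2 (by simp [hE0])
    · show cosAngle (γ t) a.1.1 a.1.2.1 a.1.2.2 = cosAngle q a.1.1 a.1.2.1 a.1.2.2
      rw [cosAngle, cosAngle, key, key, exp_skew_inner hstar,
        exp_skew_norm hstar, exp_skew_norm hstar,
        real_inner_smul_left, real_inner_smul_right, norm_smul, norm_smul,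
        Real.norm_eq_abs, abs_of_pos he]
      rw [show Real.exp (c*t) * (Real.exp (c*t) * ⟪q a.1.2.1 - q a.1.1, q a.1.2.2 - q a.1.1⟫)
          = (Real.exp (c*t) * Real.exp (c*t))
            * ⟪q a.1.2.1 - q a.1.1, q a.1.2.2 - q a.1.1⟫ from by ring,
        show (Real.exp (c*t) * ‖q a.1.2.1 - q a.1.1‖) * (Real.exp (c*t) * ‖q a.1.2.2 - q a.1.1‖)
          = (Real.exp (c*t) * Real.exp (c*t))
            * (‖q a.1.2.1 - q a.1.1‖ * ‖q a.1.2.2 - q a.1.1‖) from by ring,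
        mul_div_mul_left _ _ (by positivity)]
  have hF : HasDerivAt (fun t => FW E A (γ t)) (RW E A q δ) 0 := by
    have hfd : HasFDerivAt (FW E A) (RW E A q) (γ 0) := by
      rw [hγ0]; exact (FW_diffAt E A q hq).hasFDerivAt
    exact hfd.comp_hasDerivAt 0 hγd
  have hC : HasDerivAt (fun t => FW E A (γ t)) 0 0 := by
    have hconst : (fun t => FW E A (γ t)) = fun _ => FW E A q := funext hinv
    rw [hconst]
    exact hasDerivAt_const 0 _
  exact hF.unique hC

end Aux

/-- GIWR is a generic property: if `p, q` are regular points of `F_W` with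
affinely spanning points and `(G, A, p)` is GIWR, then `(G, A, q)` is GIWR — both for
`E ≠ ∅` (trivial motions = translations and rotations) and for `E = ∅` (additionally
scalings). -/
theorem stmt11 {d n : ℕ} (hd : d = 2 ∨ d = 3) (hn : 3 ≤ n)
    (E : Finset (Fin n × Fin n)) (A : Finset (Fin n × Fin n × Fin n))
    (hE : ∀ e ∈ E, e.1 ≠ e.2)
    (hA : ∀ a ∈ A, a.1 ≠ a.2.1 ∧ a.1 ≠ a.2.2 ∧ a.2.1 ≠ a.2.2)
    (p q : Conf d n)
    (hpreg : IsRegularPt E A p) (hqreg : IsRegularPt E A q)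
    (hpspan : affineSpan ℝ (Set.range (fun i => p i)) = ⊤)
    (hqspan : affineSpan ℝ (Set.range (fun i => q i)) = ⊤) :
    (E.Nonempty →
      (LinearMap.ker (RW E A p).toLinearMap : Set (Conf d n)) = trivialMotions p →
      (LinearMap.ker (RW E A q).toLinearMap : Set (Conf d n)) = trivialMotions q) ∧
    (E = ∅ →
      (LinearMap.ker (RW E A p).toLinearMap : Set (Conf d n)) = trivialMotionsScale p →
      (LinearMap.ker (RW E A q).toLinearMap : Set (Conf d n)) = trivialMotionsScale q) := by
  have hn0 : 0 < n := by omega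
  have hd0 : 0 < d := by rcases hd with h | h <;> omega
  have hrank : Module.finrank ℝ ↥(LinearMap.range (RW E A q).toLinearMap)
      = Module.finrank ℝ ↥(LinearMap.range (RW E A p).toLinearMap) :=
    le_antisymm (hpreg.2 q hqreg.1) (hqreg.2 p hpreg.1)
  have hker_rank : Module.finrank ℝ ↥(LinearMap.ker (RW E A q).toLinearMap)
      = Module.finrank ℝ ↥(LinearMap.ker (RW E A p).toLinearMap) := by
    have h1 := LinearMap.finrank_range_add_finrank_ker
      ((RW E A p) : Conf d n →ₗ[ℝ] EuclideanSpace ℝ (↥E ⊕ ↥A))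
    have h2 := LinearMap.finrank_range_add_finrank_ker
      ((RW E A q) : Conf d n →ₗ[ℝ] EuclideanSpace ℝ (↥E ⊕ ↥A))
    have e1 : ∀ r : Conf d n →L[ℝ] EuclideanSpace ℝ (↥E ⊕ ↥A),
        LinearMap.ker ((r : Conf d n →ₗ[ℝ] EuclideanSpace ℝ (↥E ⊕ ↥A)))
          = LinearMap.ker r.toLinearMap := fun r => Submodule.ext fun x => Iff.rfl
    have e2 : ∀ r : Conf d n →L[ℝ] EuclideanSpace ℝ (↥E ⊕ ↥A),
        LinearMap.range ((r : Conf d n →ₗ[ℝ] EuclideanSpace ℝ (↥E ⊕ ↥A)))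
          = LinearMap.range r.toLinearMap := fun r => Submodule.ext fun x => Iff.rfl
    rw [e1, e2] at h1
    rw [e1, e2] at h2
    omega
  constructor
  · intro _ hker
    have hkerP : LinearMap.ker (RW E A p).toLinearMap = LinearMap.range (Phi p) :=
      SetLike.coe_injective (hker.trans (trivialMotions_eq p))
    have hle : LinearMap.range (Phi q) ≤ LinearMap.ker (RW E A q).toLinearMap := by
      rintro δ ⟨⟨v, J⟩, rfl⟩
      have heq : (Phi q (v, J))
          = WithLp.toLp 2 (fun i => v + (J : Pt d →ₗ[ℝ] Pt d) (q i) + (0:ℝ) • q i) := by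
        refine PiLp.ext fun i => ?_; simp [Phi]
      rw [LinearMap.mem_ker, heq]
      exact RW_trivial E A q hqreg.1 v _ J.2 0 (Or.inl rfl)
    have hfr : Module.finrank ℝ ↥(LinearMap.range (Phi q))
        = Module.finrank ℝ ↥(LinearMap.ker (RW E A q).toLinearMap) := by
      rw [hker_rank, hkerP, LinearMap.finrank_range_of_inj (Phi_injective hn0 hpspan),
        LinearMap.finrank_range_of_inj (Phi_injective hn0 hqspan)]
    have hEq : LinearMap.range (Phi q) = LinearMap.ker (RW E A q).toLinearMap :=
      Submodule.eq_of_le_of_finrank_eq hle hfr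
    rw [← hEq, trivialMotions_eq q]
  · intro hE0 hker
    have hkerP : LinearMap.ker (RW E A p).toLinearMap = LinearMap.range (PhiS p) :=
      SetLike.coe_injective (hker.trans (trivialMotionsScale_eq p))
    have hle : LinearMap.range (PhiS q) ≤ LinearMap.ker (RW E A q).toLinearMap := by
      rintro δ ⟨⟨v, J, c⟩, rfl⟩
      have heq : (PhiS q (v, J, c))
          = WithLp.toLp 2 (fun i => v + (J : Pt d →ₗ[ℝ] Pt d) (q i) + c • q i) := by
        refine PiLp.ext fun i => ?_; simp [PhiS]
      rw [LinearMap.mem_ker, heq]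
      exact RW_trivial E A q hqreg.1 v _ J.2 c (Or.inr hE0)
    have hfr : Module.finrank ℝ ↥(LinearMap.range (PhiS q))
        = Module.finrank ℝ ↥(LinearMap.ker (RW E A q).toLinearMap) := by
      rw [hker_rank, hkerP,
        LinearMap.finrank_range_of_inj (PhiS_injective hn0 hd0 hpspan),
        LinearMap.finrank_range_of_inj (PhiS_injective hn0 hd0 hqspan)]
    have hEq : LinearMap.range (PhiS q) = LinearMap.ker (RW E A q).toLinearMap :=
      Submodule.eq_of_le_of_finrank_eq hle hfr
    rw [← hEq, trivialMotionsScale_eq q]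
end
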